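/- Value gap decomposition for greedy policies (Lemma B.5): In a finite-horizon tabular MDP, let Q̄_h : S×A → ℝ for h = 1,…,H be arbitrary functions, let π̂ be the deterministic greedy policy (π̂_h(s) maximizes Q̄_h(s,·)), set Ṽ_{H+1} ≡ 0 and Ṽ_h(s) := max_{a∈A} Q̄_h(s,a), and define ξ_h(s,a) := (T_h Ṽ_{h+1})(s,a) − Q̄_h(s,a). Then for every policy π, every t ∈ {1,…,H} and every state s: V^π_t(s) − V^{π̂}_t(s) ≤ Σ_{h=t}^H E_π[ ξ_h(s_h,a_h) | s_t = s ] − Σ_{h=t}^H E_{π̂}[ ξ_h(s_h,a_h) | s_t = s ]. -/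

import Mathlib

open Finset

/-- Bellman operator `(T_h V)(s,a) = r_h(s,a) + Σ_{s'} P_h(s'|s,a) V(s')`. -/
noncomputable def bellmanT {S A : Type*} [Fintype S]
    (P : ℕ → S → A → S → ℝ) (r : ℕ → S → A → ℝ)
    (h : ℕ) (V : S → ℝ) (s : S) (a : A) : ℝ :=
  r h s a + ∑ s' : S, P h s a s' * V s'

/-- Value function with `k` steps remaining, starting at time `h`. -/
noncomputable def VpiAux {S A : Type*} [Fintype S] [Fintype A]
    (P : ℕ → S → A → S → ℝ) (r : ℕ → S → A → ℝ) (pol : ℕ → S → A → ℝ) :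
    ℕ → ℕ → S → ℝ
  | 0, _, _ => 0
  | k + 1, h, s => ∑ a : A, pol h s a *
      (r h s a + ∑ s' : S, P h s a s' * VpiAux P r pol k (h + 1) s')

/-- The value function `V^π_h` in the MDP with horizon `H`. -/
noncomputable def Vpi {S A : Type*} [Fintype S] [Fintype A]
    (P : ℕ → S → A → S → ℝ) (r : ℕ → S → A → ℝ) (pol : ℕ → S → A → ℝ)
    (H h : ℕ) (s : S) : ℝ :=
  VpiAux P r pol (H + 1 - h) h s

/-- State occupancy `k` steps after starting from state `s` at time `t`. -/
noncomputable def occAux {S A : Type*} [Fintype S] [Fintype A] [DecidableEq S]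
    (P : ℕ → S → A → S → ℝ) (pol : ℕ → S → A → ℝ) (t : ℕ) (s : S) :
    ℕ → S → ℝ
  | 0, s' => if s' = s then 1 else 0
  | k + 1, s'' => ∑ s' : S, ∑ a : A,
      occAux P pol t s k s' * pol (t + k) s' a * P (t + k) s' a s''

/-- Trajectory expectation `E_π[ g(s_h,a_h) | s_t = s ]`. -/
noncomputable def trajE {S A : Type*} [Fintype S] [Fintype A] [DecidableEq S]
    (P : ℕ → S → A → S → ℝ) (pol : ℕ → S → A → ℝ) (t : ℕ) (s : S)
    (h : ℕ) (g : S → A → ℝ) : ℝ :=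
  ∑ s' : S, ∑ a : A, occAux P pol t s (h - t) s' * pol h s' a * g s' a

/-- A deterministic policy, viewed as a randomized policy (point mass). -/
def detPol {S A : Type*} [DecidableEq A] (pd : ℕ → S → A) : ℕ → S → A → ℝ :=
  fun h s a => if a = pd h s then 1 else 0

lemma swap4 {S A : Type*} [Fintype S] [Fintype A] (f : S → A → A → S → ℝ) :
    ∑ s' : S, ∑ a' : A, ∑ a : A, ∑ sm : S, f s' a' a sm
    = ∑ a : A, ∑ sm : S, ∑ s' : S, ∑ a' : A, f s' a' a sm := by
  have h1 : ∀ s' : S, ∑ a' : A, ∑ a : A, ∑ sm : S, f s' a' a sm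
      = ∑ a : A, ∑ a' : A, ∑ sm : S, f s' a' a sm := fun s' => Finset.sum_comm
  simp_rw [h1]
  rw [Finset.sum_comm]
  refine Finset.sum_congr rfl fun a _ => ?_
  have h2 : ∀ s' : S, ∑ a' : A, ∑ sm : S, f s' a' a sm
      = ∑ sm : S, ∑ a' : A, f s' a' a sm := fun s' => Finset.sum_comm
  simp_rw [h2]
  exact Finset.sum_comm

lemma occAux_shift {S A : Type*} [Fintype S] [Fintype A] [DecidableEq S]
    (P : ℕ → S → A → S → ℝ) (pol : ℕ → S → A → ℝ) (t : ℕ) (s : S) :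
    ∀ k (s'' : S), occAux P pol t s (k+1) s'' =
      ∑ a : A, pol t s a * ∑ sm : S, P t s a sm * occAux P pol (t+1) sm k s'' := by
  intro k
  induction k with
  | zero =>
      intro s''
      simp [occAux, mul_ite, mul_one, mul_zero]
  | succ k ih =>
      intro s''
      have L : occAux P pol t s (k+1+1) s'' = ∑ a : A, ∑ sm : S, ∑ s' : S, ∑ a' : A,
          pol t s a * (P t s a sm * (occAux P pol (t+1) sm k s' *
            (pol (t + (k+1)) s' a' * P (t + (k+1)) s' a' s''))) := by
        rw [occAux, ← swap4]
        refine Finset.sum_congr rfl fun s' _ => Finset.sum_congr rfl fun a' _ => ?_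
        rw [ih s']
        simp only [Finset.sum_mul, Finset.mul_sum]
        exact Finset.sum_congr rfl fun a _ => Finset.sum_congr rfl fun sm _ => by ring
      rw [L]
      refine Finset.sum_congr rfl fun a _ => ?_
      rw [Finset.mul_sum]
      refine Finset.sum_congr rfl fun sm _ => ?_
      rw [occAux]
      have e : t + 1 + k = t + (k+1) := by omega
      rw [e]
      simp only [Finset.mul_sum]
      exact Finset.sum_congr rfl fun s' _ => Finset.sum_congr rfl fun a' _ => by ring

lemma trajE_self {S A : Type*} [Fintype S] [Fintype A] [DecidableEq S]
    (P : ℕ → S → A → S → ℝ) (pol : ℕ → S → A → ℝ) (t : ℕ) (s : S)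
    (g : S → A → ℝ) : trajE P pol t s t g = ∑ a : A, pol t s a * g s a := by
  simp [trajE, occAux, ite_mul, one_mul, zero_mul]

lemma trajE_shift {S A : Type*} [Fintype S] [Fintype A] [DecidableEq S]
    (P : ℕ → S → A → S → ℝ) (pol : ℕ → S → A → ℝ) (t : ℕ) (s : S)
    (h : ℕ) (ht : t < h) (g : S → A → ℝ) :
    trajE P pol t s h g = ∑ a : A, pol t s a *
      ∑ sm : S, P t s a sm * trajE P pol (t+1) sm h g := by
  unfold trajE
  have e : h - t = (h - (t+1)) + 1 := by omega
  rw [e]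
  simp_rw [occAux_shift]
  simp only [Finset.sum_mul, Finset.mul_sum]
  rw [swap4 (f := fun s' a' a sm => pol t s a * (P t s a sm *
      occAux P pol (t+1) sm (h-(t+1)) s') * pol h s' a' * g s' a')]
  exact Finset.sum_congr rfl fun a _ => Finset.sum_congr rfl fun sm _ =>
    Finset.sum_congr rfl fun s' _ => Finset.sum_congr rfl fun a' _ => by ring

lemma Fsum_rec {S A : Type*} [Fintype S] [Fintype A] [DecidableEq S]
    (P : ℕ → S → A → S → ℝ) (pol : ℕ → S → A → ℝ) (t H : ℕ) (ht : t ≤ H)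
    (s : S) (xi : ℕ → S → A → ℝ) :
    ∑ h ∈ Icc t H, trajE P pol t s h (xi h)
    = ∑ a : A, pol t s a * (xi t s a +
        ∑ sm : S, P t s a sm * ∑ h ∈ Icc (t+1) H, trajE P pol (t+1) sm h (xi h)) := by
  have hsplit : Icc t H = insert t (Ioc t H) := (Finset.Ioc_insert_left ht).symm
  rw [hsplit, Finset.sum_insert Finset.left_notMem_Ioc, trajE_self]
  have hIoc : ∀ sm : S, ∑ h ∈ Icc (t+1) H, trajE P pol (t+1) sm h (xi h)
      = ∑ h ∈ Ioc t H, trajE P pol (t+1) sm h (xi h) := by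
    intro sm; rw [Finset.Icc_add_one_left_eq_Ioc]
  simp_rw [hIoc, mul_add, Finset.sum_add_distrib]
  congr 1
  calc ∑ h ∈ Ioc t H, trajE P pol t s h (xi h)
      = ∑ h ∈ Ioc t H, ∑ a : A, pol t s a *
          ∑ sm : S, P t s a sm * trajE P pol (t+1) sm h (xi h) :=
        Finset.sum_congr rfl fun h hh => trajE_shift P pol t s h (Finset.mem_Ioc.mp hh).1 (xi h)
    _ = ∑ a : A, ∑ h ∈ Ioc t H, pol t s a *
          ∑ sm : S, P t s a sm * trajE P pol (t+1) sm h (xi h) := Finset.sum_comm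
    _ = ∑ a : A, pol t s a * ∑ sm : S, P t s a sm *
          ∑ h ∈ Ioc t H, trajE P pol (t+1) sm h (xi h) := by
        refine Finset.sum_congr rfl fun a _ => ?_
        rw [← Finset.mul_sum]
        congr 1
        rw [Finset.sum_comm]
        exact Finset.sum_congr rfl fun sm _ => (Finset.mul_sum _ _ _).symm

noncomputable def Gsum {S A : Type*} [Fintype S] [Fintype A] [DecidableEq S]
    (P : ℕ → S → A → S → ℝ) (pol : ℕ → S → A → ℝ) (r : ℕ → S → A → ℝ)
    (Qbar : ℕ → S → A → ℝ) (Vtil : ℕ → S → ℝ) (H u : ℕ) (s' : S) : ℝ :=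
  ∑ h ∈ Icc u H, trajE P pol u s' h
    (fun s'' a => bellmanT P r h (Vtil (h + 1)) s'' a - Qbar h s'' a)

lemma Gsum_rec {S A : Type*} [Fintype S] [Fintype A] [DecidableEq S]
    (P : ℕ → S → A → S → ℝ) (pol : ℕ → S → A → ℝ) (r : ℕ → S → A → ℝ)
    (Qbar : ℕ → S → A → ℝ) (Vtil : ℕ → S → ℝ) (H t : ℕ) (ht : t ≤ H) (s : S) :
    Gsum P pol r Qbar Vtil H t s = ∑ a : A, pol t s a *
      ((bellmanT P r t (Vtil (t + 1)) s a - Qbar t s a) +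
        ∑ sm : S, P t s a sm * Gsum P pol r Qbar Vtil H (t+1) sm) := by
  exact Fsum_rec P pol t H ht s
    (fun h s'' a => bellmanT P r h (Vtil (h + 1)) s'' a - Qbar h s'' a)

lemma Gsum_top {S A : Type*} [Fintype S] [Fintype A] [DecidableEq S]
    (P : ℕ → S → A → S → ℝ) (pol : ℕ → S → A → ℝ) (r : ℕ → S → A → ℝ)
    (Qbar : ℕ → S → A → ℝ) (Vtil : ℕ → S → ℝ) (H : ℕ) (s : S) :
    Gsum P pol r Qbar Vtil H (H+1) s = 0 := by
  unfold Gsum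
  rw [Finset.Icc_eq_empty_of_lt (by omega)]
  simp

section Main

variable {S A : Type*} [Fintype S] [Fintype A] [Nonempty S] [Nonempty A]
    [DecidableEq S] [DecidableEq A]

/-- π-side: value at most `Ṽ` plus accumulated Bellman errors. -/
lemma value_le_aux
    (H : ℕ)
    (P : ℕ → S → A → S → ℝ)
    (hPnn : ∀ h ∈ Icc 1 H, ∀ s a s', 0 ≤ P h s a s')
    (r : ℕ → S → A → ℝ)
    (Qbar : ℕ → S → A → ℝ) (Vtil : ℕ → S → ℝ)
    (hVtop : ∀ s, Vtil (H + 1) s = 0)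
    (hVtil : ∀ h ∈ Icc 1 H, ∀ s,
      Vtil h s = univ.sup' univ_nonempty (fun a => Qbar h s a))
    (pol : ℕ → S → A → ℝ)
    (hpolnn : ∀ h ∈ Icc 1 H, ∀ s a, 0 ≤ pol h s a)
    (hpolsum : ∀ h ∈ Icc 1 H, ∀ s, ∑ a : A, pol h s a = 1) :
    ∀ k t, t + k = H + 1 → 1 ≤ t → ∀ s : S,
      VpiAux P r pol k t s ≤ Vtil t s + Gsum P pol r Qbar Vtil H t s := by
  intro k
  induction k with
  | zero =>
      intro t htk _ s
      have : t = H + 1 := by omega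
      subst this
      simp [VpiAux, hVtop, Gsum_top]
  | succ k ih =>
      intro t htk ht1 s
      have htH : t ≤ H := by omega
      have htm : t ∈ Icc 1 H := Finset.mem_Icc.mpr ⟨ht1, htH⟩
      have ihs : ∀ s' : S, VpiAux P r pol k (t+1) s'
          ≤ Vtil (t+1) s' + Gsum P pol r Qbar Vtil H (t+1) s' :=
        fun s' => ih (t+1) (by omega) (by omega) s'
      calc VpiAux P r pol (k+1) t s
          = ∑ a : A, pol t s a *
              (r t s a + ∑ s' : S, P t s a s' * VpiAux P r pol k (t+1) s') := by
            rw [VpiAux]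
        _ ≤ ∑ a : A, pol t s a * (r t s a + ∑ s' : S, P t s a s' *
              (Vtil (t+1) s' + Gsum P pol r Qbar Vtil H (t+1) s')) := by
            refine Finset.sum_le_sum fun a _ => ?_
            refine mul_le_mul_of_nonneg_left ?_ (hpolnn t htm s a)
            refine add_le_add_right (Finset.sum_le_sum fun s' _ => ?_) _
            exact mul_le_mul_of_nonneg_left (ihs s') (hPnn t htm s a s')
        _ = ∑ a : A, pol t s a * (Qbar t s a +
              ((bellmanT P r t (Vtil (t + 1)) s a - Qbar t s a) +
                ∑ s' : S, P t s a s' * Gsum P pol r Qbar Vtil H (t+1) s')) := by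
            refine Finset.sum_congr rfl fun a _ => ?_
            simp only [bellmanT, mul_add, Finset.sum_add_distrib]
            ring
        _ ≤ ∑ a : A, pol t s a * (Vtil t s +
              ((bellmanT P r t (Vtil (t + 1)) s a - Qbar t s a) +
                ∑ s' : S, P t s a s' * Gsum P pol r Qbar Vtil H (t+1) s')) := by
            refine Finset.sum_le_sum fun a _ => ?_
            refine mul_le_mul_of_nonneg_left (add_le_add_left ?_ _) (hpolnn t htm s a)
            rw [hVtil t htm s]
            exact Finset.le_sup' _ (mem_univ a)
        _ = Vtil t s + Gsum P pol r Qbar Vtil H t s := by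
            rw [Gsum_rec P pol r Qbar Vtil H t htH s]
            simp only [mul_add, Finset.sum_add_distrib, ← Finset.sum_mul,
              hpolsum t htm s, one_mul]

/-- π̂-side: value of the greedy policy equals `Ṽ` plus accumulated errors. -/
lemma value_eq_aux
    (H : ℕ)
    (P : ℕ → S → A → S → ℝ)
    (r : ℕ → S → A → ℝ)
    (Qbar : ℕ → S → A → ℝ) (Vtil : ℕ → S → ℝ) (pd : ℕ → S → A)
    (hGreedy : ∀ h ∈ Icc 1 H, ∀ s a, Qbar h s a ≤ Qbar h s (pd h s))
    (hVtop : ∀ s, Vtil (H + 1) s = 0)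
    (hVtil : ∀ h ∈ Icc 1 H, ∀ s,
      Vtil h s = univ.sup' univ_nonempty (fun a => Qbar h s a)) :
    ∀ k t, t + k = H + 1 → 1 ≤ t → ∀ s : S,
      VpiAux P r (detPol pd) k t s
        = Vtil t s + Gsum P (detPol pd) r Qbar Vtil H t s := by
  intro k
  induction k with
  | zero =>
      intro t htk _ s
      have : t = H + 1 := by omega
      subst this
      simp [VpiAux, hVtop, Gsum_top]
  | succ k ih =>
      intro t htk ht1 s
      have htH : t ≤ H := by omega
      have htm : t ∈ Icc 1 H := Finset.mem_Icc.mpr ⟨ht1, htH⟩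
      have ihs : ∀ s' : S, VpiAux P r (detPol pd) k (t+1) s'
          = Vtil (t+1) s' + Gsum P (detPol pd) r Qbar Vtil H (t+1) s' :=
        fun s' => ih (t+1) (by omega) (by omega) s'
      have hdet : ∀ Y : A → ℝ, ∑ a : A, detPol pd t s a * Y a = Y (pd t s) := by
        intro Y
        simp [detPol, ite_mul, zero_mul, one_mul]
      have hpdmax : Vtil t s = Qbar t s (pd t s) := by
        rw [hVtil t htm s]
        exact le_antisymm (Finset.sup'_le _ _ fun a _ => hGreedy t htm s a)
          (Finset.le_sup' _ (mem_univ _))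
      calc VpiAux P r (detPol pd) (k+1) t s
          = ∑ a : A, detPol pd t s a *
              (r t s a + ∑ s' : S, P t s a s' * VpiAux P r (detPol pd) k (t+1) s') := by
            rw [VpiAux]
        _ = r t s (pd t s) + ∑ s' : S, P t s (pd t s) s' *
              (Vtil (t+1) s' + Gsum P (detPol pd) r Qbar Vtil H (t+1) s') := by
            rw [hdet]
            simp_rw [ihs]
        _ = Vtil t s + ((bellmanT P r t (Vtil (t + 1)) s (pd t s) - Qbar t s (pd t s)) +
              ∑ s' : S, P t s (pd t s) s' * Gsum P (detPol pd) r Qbar Vtil H (t+1) s') := by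
            simp only [bellmanT, mul_add, Finset.sum_add_distrib]
            rw [hpdmax]
            ring
        _ = Vtil t s + Gsum P (detPol pd) r Qbar Vtil H t s := by
            rw [Gsum_rec P (detPol pd) r Qbar Vtil H t htH s, hdet]

end Main

/-- Value gap decomposition for greedy policies (Lemma B.5): for the greedy policy `π̂`
of arbitrary functions `Q̄_h` and `ξ_h := T_h Ṽ_{h+1} − Q̄_h`, every policy `π`,
`t ∈ {1,…,H}` and state `s` satisfy
`V^π_t(s) − V^{π̂}_t(s) ≤ Σ_{h=t}^H E_π[ξ_h | s_t=s] − Σ_{h=t}^H E_{π̂}[ξ_h | s_t=s]`. -/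
theorem value_gap_decomposition_greedy
    {S A : Type*} [Fintype S] [Fintype A] [Nonempty S] [Nonempty A]
    [DecidableEq S] [DecidableEq A]
    (H : ℕ) (hH : 1 ≤ H)
    (P : ℕ → S → A → S → ℝ)
    (hPnn : ∀ h ∈ Icc 1 H, ∀ s a s', 0 ≤ P h s a s')
    (hPsum : ∀ h ∈ Icc 1 H, ∀ s a, ∑ s' : S, P h s a s' = 1)
    (r : ℕ → S → A → ℝ)
    (hrnn : ∀ h ∈ Icc 1 H, ∀ s a, 0 ≤ r h s a)
    (hr1 : ∀ h ∈ Icc 1 H, ∀ s a, r h s a ≤ 1)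
    (Qbar : ℕ → S → A → ℝ) (Vtil : ℕ → S → ℝ) (pd : ℕ → S → A)
    (hGreedy : ∀ h ∈ Icc 1 H, ∀ s a, Qbar h s a ≤ Qbar h s (pd h s))
    (hVtop : ∀ s, Vtil (H + 1) s = 0)
    (hVtil : ∀ h ∈ Icc 1 H, ∀ s,
      Vtil h s = univ.sup' univ_nonempty (fun a => Qbar h s a)) :
    ∀ pol : ℕ → S → A → ℝ,
      (∀ h ∈ Icc 1 H, ∀ s a, 0 ≤ pol h s a) →
      (∀ h ∈ Icc 1 H, ∀ s, ∑ a : A, pol h s a = 1) →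
      ∀ t ∈ Icc 1 H, ∀ s : S,
        Vpi P r pol H t s - Vpi P r (detPol pd) H t s ≤
          (∑ h ∈ Icc t H, trajE P pol t s h
              (fun s' a => bellmanT P r h (Vtil (h + 1)) s' a - Qbar h s' a)) -
          (∑ h ∈ Icc t H, trajE P (detPol pd) t s h
              (fun s' a => bellmanT P r h (Vtil (h + 1)) s' a - Qbar h s' a)) := by
  intro pol hpolnn hpolsum t htmem s
  obtain ⟨ht1, htH⟩ := Finset.mem_Icc.mp htmem
  have hk : t + (H + 1 - t) = H + 1 := by omega
  have h1 := value_le_aux H P hPnn r Qbar Vtil hVtop hVtil pol hpolnn hpolsum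
    (H + 1 - t) t hk ht1 s
  have h2 := value_eq_aux H P r Qbar Vtil pd hGreedy hVtop hVtil
    (H + 1 - t) t hk ht1 s
  show Vpi P r pol H t s - Vpi P r (detPol pd) H t s ≤
    Gsum P pol r Qbar Vtil H t s - Gsum P (detPol pd) r Qbar Vtil H t s
  unfold Vpi
  linarith
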